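/- Let g : ℝⁿ → ℝ be a convex continuous function and let 0 < λ₁ ≤ λ₂. Then the Moreau–Yosida envelopes g^{λ₁} and g^{λ₂} are differentiable and satisfy ‖∇g^{λ₁}(x)‖ ≥ ‖∇g^{λ₂}(x)‖ for every x ∈ ℝⁿ. -/

import Mathlib

local notation "⟪" x ", " y "⟫" => @inner ℝ _ _ x y

/-- The Moreau–Yosida envelope of `g` with parameter `lam`. -/
noncomputable def mye {n : ℕ} (g : EuclideanSpace ℝ (Fin n) → ℝ) (lam : ℝ)
    (x : EuclideanSpace ℝ (Fin n)) : ℝ :=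
  ⨅ z : EuclideanSpace ℝ (Fin n), (g z + ‖x - z‖ ^ 2 / (2 * lam))

section moreauAux

variable {n : ℕ}

local notation "E" => EuclideanSpace ℝ (Fin n)

private lemma real_le_eps {a b : ℝ} (h : ∀ ε : ℝ, 0 < ε → a ≤ b + ε) : a ≤ b := by
  by_contra h'
  push_neg at h'
  have := h ((a - b) / 2) (by linarith)
  linarith

/-- A convex continuous function has a continuous affine minorant. -/
lemma moreau_minorant (g : E → ℝ) (hconv : ConvexOn ℝ Set.univ g) (hcont : Continuous g) :
    ∃ (c : ℝ) (L : E →L[ℝ] ℝ), ∀ z, c + L z ≤ g z := by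
  set S : Set (E × ℝ) := {p | g p.1 < p.2} with hS
  have hopen : IsOpen S := by
    have hSeq : S = (fun p : E × ℝ => p.2 - g p.1) ⁻¹' Set.Ioi 0 := by
      ext p; simp [hS, sub_pos]
    rw [hSeq]
    exact (continuous_snd.sub (hcont.comp continuous_fst)).isOpen_preimage _ isOpen_Ioi
  have hconvS : Convex ℝ S := by
    rintro ⟨p, s⟩ hp ⟨q, t⟩ hq a b ha hb hab
    simp only [hS, Set.mem_setOf_eq] at hp hq ⊢
    have h1 := hconv.2 (Set.mem_univ p) (Set.mem_univ q) ha hb hab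
    simp only [smul_eq_mul] at h1 ⊢
    have h2 : a * g p + b * g q < a * s + b * t := by
      rcases ha.lt_or_eq with hpos | h0
      · exact add_lt_add_of_lt_of_le (mul_lt_mul_of_pos_left hp hpos)
          (mul_le_mul_of_nonneg_left hq.le hb)
      · obtain rfl := h0.symm
        have hb1 : b = 1 := by linarith
        subst hb1
        simpa using hq
    exact lt_of_le_of_lt h1 h2
  have disj : ((0 : E), g 0) ∉ S := by simp [hS]
  obtain ⟨f, hf⟩ := geometric_hahn_banach_open_point hconvS hopen disj
  set α : ℝ := f ((0 : E), (1 : ℝ)) with hαdef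
  have key : ∀ z t, g z < t → f (z, 0) + t * α < f (0, 0) + g 0 * α := by
    intro z t ht
    have h2 := hf (z, t) ht
    have e1 : ((z, t) : E × ℝ) = (z, (0:ℝ)) + t • ((0:E), (1:ℝ)) := by
      simp [Prod.ext_iff]
    have e2 : (((0:E), g 0) : E × ℝ) = ((0:E), (0:ℝ)) + (g 0) • ((0:E), (1:ℝ)) := by
      simp [Prod.ext_iff]
    rw [e1, e2, map_add, map_add, map_smul, map_smul, smul_eq_mul, smul_eq_mul] at h2
    linarith
  have hαneg : α < 0 := by
    have := key 0 (g 0 + 1) (by linarith)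
    nlinarith
  have hαne : α ≠ 0 := ne_of_lt hαneg
  have key2 : ∀ z, f (z, 0) + g z * α ≤ f (0, 0) + g 0 * α := by
    intro z
    apply real_le_eps
    intro ε hε
    have hpos : 0 < ε / (-α) := div_pos hε (by linarith)
    have h3 := key z (g z + ε / (-α)) (by linarith)
    have h4 : (g z + ε / (-α)) * α = g z * α - ε := by
      have hne : (-α) ≠ 0 := by simpa using hαne
      field_simp
      ring
    linarith
  refine ⟨g 0 + α⁻¹ * f (0, 0), (-α⁻¹) • (f.comp (ContinuousLinearMap.inl ℝ E ℝ)), fun z => ?_⟩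
  have hLz : ((-α⁻¹) • (f.comp (ContinuousLinearMap.inl ℝ E ℝ))) z = -α⁻¹ * f (z, 0) := by
    simp [ContinuousLinearMap.smul_apply]
  rw [hLz]
  have hinv : α⁻¹ < 0 := inv_lt_zero.mpr hαneg
  have h3 : α⁻¹ * (f (0,0) + g 0 * α) ≤ α⁻¹ * (f (z,0) + g z * α) :=
    mul_le_mul_of_nonpos_left (key2 z) hinv.le
  have hc : α * α⁻¹ = 1 := mul_inv_cancel₀ hαne
  have e1 : α⁻¹ * (f (0,0) + g 0 * α) = α⁻¹ * f (0,0) + g 0 * (α * α⁻¹) := by ring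
  have e2 : α⁻¹ * (f (z,0) + g z * α) = α⁻¹ * f (z,0) + g z * (α * α⁻¹) := by ring
  rw [e1, e2, hc, mul_one, mul_one] at h3
  linarith


/-- Existence of a proximal point. -/
lemma moreau_prox (g : E → ℝ) {c : ℝ} {L : E →L[ℝ] ℝ} (hcl : ∀ z, c + L z ≤ g z)
    (hcont : Continuous g) {lam : ℝ} (hl : 0 < lam) (x : E) :
    ∃ p : E, ∀ z, g p + ‖x - p‖ ^ 2 / (2 * lam) ≤ g z + ‖x - z‖ ^ 2 / (2 * lam) := by
  set φ : E → ℝ := fun z => g z + ‖x - z‖ ^ 2 / (2 * lam) with hφ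
  have hφc : Continuous φ := by
    apply hcont.add
    exact ((continuous_const.sub continuous_id).norm.pow 2).div_const _
  set M : ℝ := g x - c - L x with hM
  set R : ℝ := max 1 (2 * lam * (‖L‖ + |M| + 1)) with hR
  apply hφc.exists_forall_le' x
  rw [Filter.eventually_iff, Filter.mem_cocompact]
  refine ⟨Metric.closedBall x R, isCompact_closedBall x R, fun z hz => ?_⟩
  simp only [Set.mem_compl_iff, Metric.mem_closedBall, not_le] at hz
  set r : ℝ := ‖x - z‖ with hr
  have hrx : dist z x = r := by
    rw [dist_eq_norm, ← norm_neg]; congr 1; abel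
  rw [hrx] at hz
  have hr1 : 1 ≤ r := le_trans (le_max_left _ _) hz.le
  have hr2 : 2 * lam * (‖L‖ + |M| + 1) ≤ r := le_trans (le_max_right _ _) hz.le
  show φ x ≤ φ z
  have hGz : c + L z ≤ g z := hcl z
  have hLz : L x - ‖L‖ * r ≤ L z := by
    have h := L.le_opNorm (x - z)
    rw [map_sub, Real.norm_eq_abs] at h
    have := abs_le.mp h
    linarith [this.2]
  have hφx : φ x = g x := by simp [hφ]
  have hsq : M + ‖L‖ * r ≤ r ^ 2 / (2 * lam) := by
    rw [le_div_iff₀ (by positivity)]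
    have h0L : 0 ≤ ‖L‖ := norm_nonneg _
    have habs : M ≤ |M| := le_abs_self M
    have h0M : 0 ≤ |M| := abs_nonneg M
    have hr0 : (0:ℝ) ≤ r := le_trans zero_le_one hr1
    nlinarith [mul_le_mul_of_nonneg_left hr2 hr0, hl,
      mul_nonneg (mul_nonneg hl.le h0M) (by linarith : (0:ℝ) ≤ r - 1),
      mul_nonneg hl.le (by linarith : (0:ℝ) ≤ |M| - M),
      mul_nonneg hl.le (by linarith : (0:ℝ) ≤ r - 1)]
  have hgoal : g x ≤ g z + r ^ 2 / (2 * lam) := by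
    have : g x = M + c + L x := by rw [hM]; ring
    linarith
  rw [hφx]
  exact hgoal

/-- Subgradient inequality for the proximal point. -/
lemma moreau_sub (g : E → ℝ) (hconv : ConvexOn ℝ Set.univ g) {lam : ℝ} (hl : 0 < lam)
    {x p : E} (hp : ∀ z, g p + ‖x - p‖ ^ 2 / (2 * lam) ≤ g z + ‖x - z‖ ^ 2 / (2 * lam))
    (z : E) : ⟪x - p, z - p⟫ ≤ lam * (g z - g p) := by
  set N : ℝ := ‖z - p‖ ^ 2 with hN
  set I : ℝ := ⟪x - p, z - p⟫ with hI
  apply real_le_eps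
  intro ε hε
  have hN0 : 0 ≤ N := by positivity
  set t : ℝ := min 1 (2 * ε / (N + 1)) with ht
  have ht0 : 0 < t := lt_min one_pos (by positivity)
  have ht1 : t ≤ 1 := min_le_left _ _
  have htN : t * (N + 1) ≤ 2 * ε := by
    have h := min_le_right 1 (2 * ε / (N + 1))
    exact (le_div_iff₀ (by positivity)).mp h
  have hcv := hconv.2 (Set.mem_univ p) (Set.mem_univ z)
    (by linarith : (0:ℝ) ≤ 1 - t) ht0.le (by ring)
  have hpt : (1 - t) • p + t • z = p + t • (z - p) := by module
  rw [hpt] at hcv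
  simp only [smul_eq_mul] at hcv
  have hmin := hp (p + t • (z - p))
  have hexp : ‖x - (p + t • (z - p))‖ ^ 2 = ‖x - p‖ ^ 2 - 2 * t * I + t ^ 2 * N := by
    have e : x - (p + t • (z - p)) = (x - p) - t • (z - p) := by module
    rw [e, norm_sub_sq_real, real_inner_smul_right, norm_smul, Real.norm_eq_abs,
      mul_pow, sq_abs, hN, hI]
    ring
  rw [hexp] at hmin
  have hsplit : (‖x - p‖ ^ 2 - 2 * t * I + t ^ 2 * N) / (2 * lam)
      = ‖x - p‖ ^ 2 / (2 * lam) + (-(2 * t * I) + t ^ 2 * N) / (2 * lam) := by ring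
  rw [hsplit] at hmin
  have h4 : (2 * t * I - t ^ 2 * N) / (2 * lam) ≤ t * (g z - g p) := by
    have e : (-(2 * t * I) + t ^ 2 * N) / (2 * lam)
        = -((2 * t * I - t ^ 2 * N) / (2 * lam)) := by ring
    rw [e] at hmin
    linarith
  have key : 2 * t * I - t ^ 2 * N ≤ t * (g z - g p) * (2 * lam) :=
    (div_le_iff₀ (by positivity)).mp h4
  nlinarith [key, mul_le_mul_of_nonneg_left htN ht0.le, ht0, sq_nonneg t, hl]

/-- The envelope has a gradient at every point. -/
lemma moreau_grad (g : E → ℝ) (hconv : ConvexOn ℝ Set.univ g) {lam : ℝ} (hl : 0 < lam)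
    (hprox : ∀ y : E, ∃ q : E, ∀ z, g q + ‖y - q‖ ^ 2 / (2 * lam) ≤ g z + ‖y - z‖ ^ 2 / (2 * lam))
    (x : E) {p : E}
    (hp : ∀ z, g p + ‖x - p‖ ^ 2 / (2 * lam) ≤ g z + ‖x - z‖ ^ 2 / (2 * lam)) :
    HasGradientAt (mye g lam) (lam⁻¹ • (x - p)) x := by
  set v : E := lam⁻¹ • (x - p) with hv
  have hlam2 : (0:ℝ) < 2 * lam := by positivity
  have hlamne : lam ≠ 0 := ne_of_gt hl
  have hbdd : ∀ y : E, BddBelow (Set.range fun z => g z + ‖y - z‖ ^ 2 / (2 * lam)) := by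
    intro y
    obtain ⟨q, hq⟩ := hprox y
    exact ⟨g q + ‖y - q‖ ^ 2 / (2 * lam), by rintro r ⟨z, rfl⟩; exact hq z⟩
  have hval : mye g lam x = g p + ‖x - p‖ ^ 2 / (2 * lam) :=
    le_antisymm (ciInf_le (hbdd x) p) (le_ciInf hp)
  have hub : ∀ y, mye g lam y ≤ mye g lam x + ⟪v, y - x⟫ + ‖y - x‖ ^ 2 / (2 * lam) := by
    intro y
    have h1 : mye g lam y ≤ g p + ‖y - p‖ ^ 2 / (2 * lam) := ciInf_le (hbdd y) p
    have h2 : ‖y - p‖ ^ 2 = ‖y - x‖ ^ 2 + 2 * ⟪y - x, x - p⟫ + ‖x - p‖ ^ 2 := by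
      have e : y - p = (y - x) + (x - p) := by abel
      rw [e, norm_add_sq_real]
    have h3 : ⟪v, y - x⟫ = lam⁻¹ * ⟪x - p, y - x⟫ := real_inner_smul_left _ _ _
    have h4 : g p + ‖y - p‖ ^ 2 / (2 * lam)
        = mye g lam x + ⟪v, y - x⟫ + ‖y - x‖ ^ 2 / (2 * lam) := by
      rw [hval, h3, h2, real_inner_comm (y - x) (x - p)]
      field_simp
      ring
    linarith
  have hlb : ∀ y, mye g lam x + ⟪v, y - x⟫ ≤ mye g lam y := by
    intro y
    refine le_ciInf fun z => ?_
    have hsubz := moreau_sub g hconv hl hp z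
    have hq : 0 ≤ ‖(y - z) - (x - p)‖ ^ 2 := by positivity
    have hexp : ‖(y - z) - (x - p)‖ ^ 2
        = ‖y - z‖ ^ 2 - 2 * ⟪x - p, y - z⟫ + ‖x - p‖ ^ 2 := by
      rw [norm_sub_sq_real, real_inner_comm (y - z) (x - p)]
    have hsplit : ⟪x - p, y - z⟫
        = ⟪x - p, y - x⟫ + ‖x - p‖ ^ 2 - ⟪x - p, z - p⟫ := by
      have e : y - z = (y - x) + ((x - p) - (z - p)) := by abel
      rw [e]
      simp only [inner_add_right, inner_sub_right]
      have hs : (inner ℝ (x - p) x : ℝ) - inner ℝ (x - p) p = ‖x - p‖ ^ 2 := by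
        have h := real_inner_self_eq_norm_sq (x - p)
        rw [inner_sub_right] at h
        exact h
      linarith
    rw [hexp, hsplit] at hq
    have key : 2 * lam * g p + ‖x - p‖ ^ 2 + 2 * ⟪x - p, y - x⟫
        ≤ 2 * lam * g z + ‖y - z‖ ^ 2 := by nlinarith [hq, hsubz]
    have e1 : mye g lam x + ⟪v, y - x⟫
        = (2 * lam * g p + ‖x - p‖ ^ 2 + 2 * ⟪x - p, y - x⟫) / (2 * lam) := by
      rw [hval, real_inner_smul_left]
      field_simp
    have e2 : g z + ‖y - z‖ ^ 2 / (2 * lam) = (2 * lam * g z + ‖y - z‖ ^ 2) / (2 * lam) := by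
      field_simp
    rw [e1, e2]
    exact (div_le_div_iff_of_pos_right hlam2).mpr key
  rw [hasGradientAt_iff_isLittleO, Asymptotics.isLittleO_iff]
  intro ε hε
  have hev : ∀ᶠ y in nhds x, dist y x < ε * (2 * lam) := by
    exact Metric.ball_mem_nhds x (by positivity)
  filter_upwards [hev] with y hy
  rw [dist_eq_norm] at hy
  have h1 := hub y
  have h2 := hlb y
  have hnn : 0 ≤ ‖y - x‖ ^ 2 / (2 * lam) := by positivity
  rw [Real.norm_eq_abs]
  have habs : |mye g lam y - mye g lam x - ⟪v, y - x⟫| ≤ ‖y - x‖ ^ 2 / (2 * lam) :=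
    abs_le.mpr ⟨by linarith, by linarith⟩
  have hfinal : ‖y - x‖ ^ 2 / (2 * lam) ≤ ε * ‖y - x‖ := by
    rw [div_le_iff₀ hlam2]
    nlinarith [norm_nonneg (y - x), hy]
  exact habs.trans hfinal

end moreauAux

theorem stmt_6 {n : ℕ} (g : EuclideanSpace ℝ (Fin n) → ℝ) (lam₁ lam₂ : ℝ)
    (hconv : ConvexOn ℝ Set.univ g) (hcont : Continuous g)
    (h₁ : 0 < lam₁) (h₁₂ : lam₁ ≤ lam₂) :
    Differentiable ℝ (mye g lam₁) ∧ Differentiable ℝ (mye g lam₂) ∧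
    ∀ x : EuclideanSpace ℝ (Fin n),
      ‖gradient (mye g lam₂) x‖ ≤ ‖gradient (mye g lam₁) x‖ := by
  obtain ⟨c, L, hcl⟩ := moreau_minorant g hconv hcont
  have h₂ : 0 < lam₂ := lt_of_lt_of_le h₁ h₁₂
  have hgrad : ∀ (lam : ℝ), 0 < lam → ∀ x, ∃ p : EuclideanSpace ℝ (Fin n),
      (∀ z, g p + ‖x - p‖ ^ 2 / (2 * lam) ≤ g z + ‖x - z‖ ^ 2 / (2 * lam)) ∧
      HasGradientAt (mye g lam) (lam⁻¹ • (x - p)) x := by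
    intro lam hl x
    obtain ⟨p, hp⟩ := moreau_prox g hcl hcont hl x
    exact ⟨p, hp, moreau_grad g hconv hl (fun y => moreau_prox g hcl hcont hl y) x hp⟩
  refine ⟨fun x => ?_, fun x => ?_, fun x => ?_⟩
  · obtain ⟨p, _, hg⟩ := hgrad lam₁ h₁ x
    exact hg.differentiableAt
  · obtain ⟨p, _, hg⟩ := hgrad lam₂ h₂ x
    exact hg.differentiableAt
  · obtain ⟨p₁, hp₁, hg₁⟩ := hgrad lam₁ h₁ x
    obtain ⟨p₂, hp₂, hg₂⟩ := hgrad lam₂ h₂ x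
    rw [hg₁.gradient, hg₂.gradient, norm_smul, norm_smul, Real.norm_eq_abs, Real.norm_eq_abs,
      abs_of_pos (inv_pos.mpr h₁), abs_of_pos (inv_pos.mpr h₂)]
    set a : ℝ := ‖x - p₁‖ with ha
    set b : ℝ := ‖x - p₂‖ with hb
    have ha0 : 0 ≤ a := norm_nonneg _
    have hb0 : 0 ≤ b := norm_nonneg _
    have s1 := moreau_sub g hconv h₁ hp₁ p₂
    have s2 := moreau_sub g hconv h₂ hp₂ p₁
    have e1 : p₂ - p₁ = (x - p₁) - (x - p₂) := by abel
    have e2 : p₁ - p₂ = (x - p₂) - (x - p₁) := by abel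
    rw [e1, inner_sub_right] at s1
    rw [e2, inner_sub_right] at s2
    have hself1 : (inner ℝ (x - p₁) (x - p₁) : ℝ) = a ^ 2 := real_inner_self_eq_norm_sq _
    have hself2 : (inner ℝ (x - p₂) (x - p₂) : ℝ) = b ^ 2 := real_inner_self_eq_norm_sq _
    have hcomm : (inner ℝ (x - p₂) (x - p₁) : ℝ) = inner ℝ (x - p₁) (x - p₂) :=
      real_inner_comm _ _
    rw [hself1] at s1
    rw [hself2, hcomm] at s2
    set i : ℝ := inner ℝ (x - p₁) (x - p₂) with hi
    have hcs : i ≤ a * b := real_inner_le_norm _ _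
    -- s1 : a^2 - i ≤ lam₁ * (g p₂ - g p₁), s2 : b^2 - i ≤ lam₂ * (g p₁ - g p₂)
    have H : lam₂ * a ^ 2 + lam₁ * b ^ 2 ≤ (lam₁ + lam₂) * (a * b) := by
      nlinarith [mul_le_mul_of_nonneg_left s1 h₂.le, mul_le_mul_of_nonneg_left s2 h₁.le,
        mul_le_mul_of_nonneg_left hcs (by linarith : (0:ℝ) ≤ lam₁ + lam₂)]
    rw [inv_mul_eq_div, inv_mul_eq_div, div_le_div_iff₀ h₂ h₁]
    -- goal : b * lam₁ ≤ a * lam₂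
    nlinarith [H, h₁, mul_nonneg ha0 (sub_nonneg.mpr h₁₂), sq_nonneg (a - b),
      mul_nonneg hb0 (sub_nonneg.mpr h₁₂), sq_nonneg (lam₁ * b - lam₂ * a)]
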